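/- For n ≥ 3 and 0 ≤ i ≤ n−1, the refined affine Eulerian polynomials of type D satisfy T̃_{n,i}(x) = x²·Σ_{j=0}^{i−1} T_{n−1,j}(x) + x·Σ_{j=i}^{2n−i−3} T_{n−1,j}(x) + Σ_{j=2n−i−2}^{2n−3} T_{n−1,j}(x), and the symmetry T̃_{n,2n−i−1}(x) = T̃_{n,i}(x). -/

import Mathlib

open Polynomial

/-- `f` has only real zeros (every complex zero is real). -/
def RealRooted (f : Polynomial ℝ) : Prop :=
  ∀ z : ℂ, z ∈ (f.map (algebraMap ℝ ℂ)).roots → z.im = 0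

/-- all zeros of `f` are real (counted with multiplicity). -/
def AllRealRoots (f : Polynomial ℝ) : Prop :=
  f.roots.card = f.natDegree

/-- two polynomials are compatible if every nonnegative linear combination
has only real zeros. -/
def Compatible (f g : Polynomial ℝ) : Prop :=
  ∀ c d : ℝ, 0 ≤ c → 0 ≤ d → RealRooted (C c * f + C d * g)

/-- `Interlaces g f` means `g ⪯ f`: both are real-rooted with positive leading
coefficients, and listing the zeros in decreasing order `u` (of `f`) and `v`
(of `g`), either `deg f = deg g` and `vₙ ≤ uₙ ≤ ⋯ ≤ v₁ ≤ u₁`, or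
`deg f = deg g + 1` and `uₙ ≤ vₙ₋₁ ≤ ⋯ ≤ v₁ ≤ u₁`. -/
def Interlaces (g f : Polynomial ℝ) : Prop :=
  0 < f.leadingCoeff ∧ 0 < g.leadingCoeff ∧
  ∃ u v : List ℝ,
    u.Pairwise (· ≥ ·) ∧ v.Pairwise (· ≥ ·) ∧
    f.roots = (u : Multiset ℝ) ∧ g.roots = (v : Multiset ℝ) ∧
    u.length = f.natDegree ∧ v.length = g.natDegree ∧
    (u.length = v.length ∨ u.length = v.length + 1) ∧
    (∀ (i : ℕ) (hv : i < v.length) (hu : i < u.length),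
      v.get ⟨i, hv⟩ ≤ u.get ⟨i, hu⟩) ∧
    (∀ (i : ℕ) (hu : i + 1 < u.length) (hv : i < v.length),
      u.get ⟨i + 1, hu⟩ ≤ v.get ⟨i, hv⟩)

/-- the finite set of type `D` inversion sequences: `e : Fin n → ℕ` with
`e i < 2(i+1)`. -/
def invSeqs (n : ℕ) : Finset (Fin n → ℕ) :=
  ((Finset.univ : Finset (Fin n → Fin (2 * n + 1))).image
      (fun e => fun i => (e i : ℕ))).filter
    (fun e => ∀ i : Fin n, e i < 2 * ((i : ℕ) + 1))

/-- value of an inversion sequence at (0-indexed) position `i`. -/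
def ev {n : ℕ} (e : Fin n → ℕ) (i : ℕ) : ℕ :=
  if h : i < n then e ⟨i, h⟩ else 0

/-- the type `D` ascent statistic:
`asc_D e = χ(e₁ + e₂/2 ≥ 3/2) + #{i ∈ [n-1] : eᵢ/i < eᵢ₊₁/(i+1)}`
(1-indexed). -/
noncomputable def ascD {n : ℕ} (e : Fin n → ℕ) : ℕ :=
  (if 3 ≤ 2 * ev e 0 + ev e 1 then 1 else 0) +
    ((Finset.Ico 1 n).filter
      (fun i => (i + 1) * ev e (i - 1) < i * ev e i)).card

/-- `exc e = #{i : eᵢ ≥ i}` (1-indexed). -/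
noncomputable def excD {n : ℕ} (e : Fin n → ℕ) : ℕ :=
  ((Finset.range n).filter (fun j => j + 1 ≤ ev e j)).card

/-- the affine type `D` ascent statistic:
`ãsc_D e = asc_D e + χ(e_{n-1}/(n-1) + e_n/n < (2n-1)/n)`. -/
noncomputable def affAscD {n : ℕ} (e : Fin n → ℕ) : ℕ :=
  ascD e +
    (if n * ev e (n - 2) + (n - 1) * ev e (n - 1) < (n - 1) * (2 * n - 1)
      then 1 else 0)

/-- the refined Eulerian polynomial `T_{n,i}(x)` of type `D`. -/
noncomputable def TD (n i : ℕ) : Polynomial ℝ :=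
  ∑ e ∈ (invSeqs n).filter (fun e => ev e (n - 1) = i), X ^ ascD e

/-- the refined `q`-Eulerian polynomial `T_{n,i}(x;q)` of type `D`. -/
noncomputable def TqD (n i : ℕ) (q : ℝ) : Polynomial ℝ :=
  ∑ e ∈ (invSeqs n).filter (fun e => ev e (n - 1) = i),
    C q ^ excD e * X ^ ascD e

/-- the refined affine Eulerian polynomial `T̃_{n,i}(x)` of type `D`. -/
noncomputable def TtD (n i : ℕ) : Polynomial ℝ :=
  ∑ e ∈ (invSeqs n).filter (fun e => ev e (n - 1) = i), X ^ affAscD e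

lemma mem_invSeqs {n : ℕ} (e : Fin n → ℕ) :
    e ∈ invSeqs n ↔ ∀ i : Fin n, e i < 2 * ((i : ℕ) + 1) := by
  constructor
  · intro h
    exact (Finset.mem_filter.1 h).2
  · intro h
    refine Finset.mem_filter.2 ⟨Finset.mem_image.2 ⟨fun i => ⟨e i, ?_⟩, Finset.mem_univ _, rfl⟩, h⟩
    have := h i
    have := i.isLt
    omega

def extSeq (m k : ℕ) (e : Fin m → ℕ) : Fin (m + 1) → ℕ :=
  fun i => if h : (i : ℕ) < m then e ⟨i, h⟩ else k

lemma ev_ext_lt (m k : ℕ) (e : Fin m → ℕ) {j : ℕ} (hj : j < m) :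
    ev (extSeq m k e) j = ev e j := by
  unfold ev extSeq
  rw [dif_pos (by omega : j < m + 1), dif_pos hj]
  simp [hj]

lemma ev_ext_last (m k : ℕ) (e : Fin m → ℕ) :
    ev (extSeq m k e) m = k := by
  unfold ev extSeq
  rw [dif_pos (by omega : m < m + 1)]
  simp

lemma ascD_ext (m k : ℕ) (hm : 2 ≤ m) (e : Fin m → ℕ) :
    ascD (extSeq m k e) =
      ascD e + (if (m + 1) * ev e (m - 1) < m * k then 1 else 0) := by
  unfold ascD
  rw [ev_ext_lt m k e (by omega : (0:ℕ) < m), ev_ext_lt m k e (by omega : (1:ℕ) < m)]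
  rw [Nat.Ico_succ_right_eq_insert_Ico (by omega : 1 ≤ m), Finset.filter_insert]
  have hfc : (Finset.Ico 1 m).filter
      (fun i => (i + 1) * ev (extSeq m k e) (i - 1) < i * ev (extSeq m k e) i) =
      (Finset.Ico 1 m).filter
      (fun i => (i + 1) * ev e (i - 1) < i * ev e i) := by
    apply Finset.filter_congr
    intro i hi
    have hi' := Finset.mem_Ico.1 hi
    rw [ev_ext_lt m k e (by omega : i - 1 < m), ev_ext_lt m k e (by omega : i < m)]
  have hlast : ((m + 1) * ev (extSeq m k e) (m - 1) < m * ev (extSeq m k e) m) ↔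
      ((m + 1) * ev e (m - 1) < m * k) := by
    rw [ev_ext_lt m k e (by omega : m - 1 < m), ev_ext_last]
  split_ifs with h1 h2 h3 <;>
    simp only [hfc] at * <;>
    first
      | (rw [Finset.card_insert_of_notMem (by simp [Finset.mem_Ico])]; omega)
      | omega
      | (exact absurd (hlast.1 h2) h3)
      | (exact absurd (hlast.2 h3) h2)

lemma affAscD_ext (m k : ℕ) (hm : 2 ≤ m) (e : Fin m → ℕ) :
    affAscD (extSeq m k e) =
      ascD e + ((if (m + 1) * ev e (m - 1) < m * k then 1 else 0) +
        (if (m + 1) * ev e (m - 1) + m * k < m * (2 * m + 1) then 1 else 0)) := by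
  unfold affAscD
  rw [ascD_ext m k hm e]
  have h1 : m + 1 - 2 = m - 1 := by omega
  have h2 : m + 1 - 1 = m := by omega
  rw [h1, h2, ev_ext_lt m k e (by omega : m - 1 < m), ev_ext_last]
  have h3 : 2 * (m + 1) - 1 = 2 * m + 1 := by omega
  rw [h3]
  omega

def resSeq (m : ℕ) (e : Fin (m + 1) → ℕ) : Fin m → ℕ :=
  fun i => e i.castSucc

lemma ev_res (m : ℕ) (e : Fin (m + 1) → ℕ) {j : ℕ} (hj : j < m) :
    ev (resSeq m e) j = ev e j := by
  unfold ev resSeq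
  rw [dif_pos hj, dif_pos (by omega : j < m + 1)]
  rfl

lemma TtD_eq (m k : ℕ) (hm : 2 ≤ m) (hk : k < 2 * (m + 1)) :
    TtD (m + 1) k = ∑ j ∈ Finset.range (2 * m),
      (X : Polynomial ℝ) ^ ((if (m + 1) * j < m * k then 1 else 0) +
        (if (m + 1) * j + m * k < m * (2 * m + 1) then 1 else 0)) * TD m j := by
  classical
  have h2 : m + 1 - 1 = m := by omega
  -- step 1: LHS as sum over invSeqs m
  have step1 : TtD (m + 1) k =
      ∑ e ∈ invSeqs m, (X : Polynomial ℝ) ^ (ascD e +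
        ((if (m + 1) * ev e (m - 1) < m * k then 1 else 0) +
         (if (m + 1) * ev e (m - 1) + m * k < m * (2 * m + 1) then 1 else 0))) := by
    unfold TtD
    rw [h2]
    refine Finset.sum_nbij' (resSeq m) (extSeq m k) ?_ ?_ ?_ ?_ ?_
    · intro e he
      rw [mem_invSeqs]
      intro i
      have := (mem_invSeqs e).1 (Finset.mem_filter.1 he).1 i.castSucc
      simpa [resSeq] using this
    · intro e he
      refine Finset.mem_filter.2 ⟨(mem_invSeqs _).2 ?_, ?_⟩
      · intro i
        by_cases h : (i : ℕ) < m
        · have := (mem_invSeqs e).1 he ⟨i, h⟩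
          simpa [extSeq, h] using this
        · have : (i : ℕ) = m := by have := i.isLt; omega
          simp [extSeq, h, this, hk]
      · rw [ev_ext_last]
    · intro e he
      funext i
      by_cases h : (i : ℕ) < m
      · simp only [extSeq, resSeq, dif_pos h]
        exact congrArg e (Fin.ext rfl)
      · have hi : (i : ℕ) = m := by have := i.isLt; omega
        have hev := (Finset.mem_filter.1 he).2
        simp only [extSeq, dif_neg h]
        unfold ev at hev
        rw [dif_pos (by omega : m < m + 1)] at hev
        rw [← hev]
        congr 1
        exact Fin.ext hi.symm
    · intro e he
      funext i
      simp only [resSeq, extSeq]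
      rw [dif_pos (by simpa using i.isLt)]
      exact congrArg e (Fin.ext rfl)
    · intro e he
      have : e = extSeq m k (resSeq m e) := by
        funext i
        by_cases h : (i : ℕ) < m
        · simp only [extSeq, resSeq, dif_pos h]
          exact congrArg e (Fin.ext rfl)
        · have hi : (i : ℕ) = m := by have := i.isLt; omega
          have hev := (Finset.mem_filter.1 he).2
          simp only [extSeq, dif_neg h]
          unfold ev at hev
          rw [dif_pos (by omega : m < m + 1)] at hev
          rw [← hev]
          congr 1
          exact Fin.ext hi
      conv_lhs => rw [this]
      rw [affAscD_ext m k hm (resSeq m e)]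
  rw [step1]
  -- step 2: fiberwise over last value
  rw [← Finset.sum_fiberwise_of_maps_to (g := fun e => ev e (m - 1))
    (t := Finset.range (2 * m))
    (fun e he => by
      rw [Finset.mem_range]
      have := (mem_invSeqs e).1 he ⟨m - 1, by omega⟩
      simp only [ev]
      rw [dif_pos (by omega : m - 1 < m)]
      omega)]
  refine Finset.sum_congr rfl (fun j hj => ?_)
  unfold TD
  rw [Finset.mul_sum]
  refine Finset.sum_congr rfl (fun e he => ?_)
  have hev : ev e (m - 1) = j := (Finset.mem_filter.1 he).2
  rw [hev, pow_add, mul_comm]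

lemma ind1_iff {m i j : ℕ} (hi : i ≤ m) : ((m + 1) * j < m * i) ↔ j < i := by
  constructor
  · intro h
    by_contra hc
    push_neg at hc
    have h1 : m * i ≤ (m + 1) * i := Nat.mul_le_mul_right i (by omega)
    have h2 : (m + 1) * i ≤ (m + 1) * j := Nat.mul_le_mul_left (m + 1) hc
    omega
  · intro h
    have h1 : (m + 1) * (j + 1) ≤ (m + 1) * i := Nat.mul_le_mul_left (m + 1) h
    nlinarith

lemma ind2_iff {m i j : ℕ} (hi : i ≤ m) :
    ((m + 1) * j + m * i < m * (2 * m + 1)) ↔ j + i < 2 * m := by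
  constructor
  · intro h
    by_contra hc
    push_neg at hc
    nlinarith
  · intro h
    nlinarith


/-- The refined affine Eulerian polynomials of type `D` expand in terms of the
`T_{n-1,j}` and satisfy the symmetry `T̃_{n,2n-i-1} = T̃_{n,i}`. -/
theorem Ttilde_recurrence (n i : ℕ) (hn : 3 ≤ n) (hi : i ≤ n - 1) :
    TtD n i = X ^ 2 * ∑ j ∈ Finset.range i, TD (n - 1) j +
      X * ∑ j ∈ Finset.Icc i (2 * n - i - 3), TD (n - 1) j +
      ∑ j ∈ Finset.Icc (2 * n - i - 2) (2 * n - 3), TD (n - 1) j ∧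
    TtD n (2 * n - i - 1) = TtD n i := by
  obtain ⟨m, rfl⟩ : ∃ m, n = m + 1 := ⟨n - 1, by omega⟩
  have hm : 2 ≤ m := by omega
  have hi' : i ≤ m := by omega
  constructor
  · rw [TtD_eq m i hm (by omega)]
    have e1 : 2 * (m + 1) - i - 3 = 2 * m - i - 1 := by omega
    have e2 : 2 * (m + 1) - i - 2 = 2 * m - i := by omega
    have e3 : 2 * (m + 1) - 3 = 2 * m - 1 := by omega
    rw [e1, e2, e3]
    simp only [Nat.add_sub_cancel]
    rw [Finset.range_eq_Ico,
      ← Finset.sum_Ico_consecutive _ (by omega : 0 ≤ i) (by omega : i ≤ 2 * m),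
      ← Finset.sum_Ico_consecutive _ (by omega : i ≤ 2 * m - i) (by omega : 2 * m - i ≤ 2 * m),
      ← add_assoc]
    congr 1
    · congr 1
      · rw [Finset.mul_sum, ← Finset.range_eq_Ico]
        refine Finset.sum_congr rfl (fun j hj => ?_)
        have hj' : j < i := Finset.mem_range.1 hj
        rw [if_pos ((ind1_iff hi').2 hj'), if_pos ((ind2_iff hi').2 (by omega))]
      · rw [Finset.mul_sum,
          show 2 * m - i = (2 * m - i - 1) + 1 from by omega, Finset.Ico_add_one_right_eq_Icc]
        refine Finset.sum_congr rfl (fun j hj => ?_)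
        have hj' := Finset.mem_Icc.1 hj
        rw [if_neg (fun h => absurd ((ind1_iff hi').1 h) (by omega : ¬ j < i)),
          if_pos ((ind2_iff hi').2 (by omega)), zero_add, pow_one]
    · rw [show Finset.Icc (2 * m - i) (2 * m - 1) = Finset.Ico (2 * m - i) (2 * m) from by
        rw [← Finset.Ico_add_one_right_eq_Icc]; congr 1; omega]
      refine Finset.sum_congr rfl (fun j hj => ?_)
      have hj' := Finset.mem_Ico.1 hj
      rw [if_neg (fun h => absurd ((ind1_iff hi').1 h) (by omega)),
        if_neg (fun h => absurd ((ind2_iff hi').1 h) (by omega))]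
      simp
  · rw [show 2 * (m + 1) - i - 1 = 2 * m + 1 - i from by omega,
      TtD_eq m (2 * m + 1 - i) hm (by omega), TtD_eq m i hm (by omega)]
    refine Finset.sum_congr rfl (fun j hj => ?_)
    have hd : m * (2 * m + 1 - i) + m * i = m * (2 * m + 1) := by
      rw [← Nat.mul_add]
      congr 1
      omega
    have c1 : ((m + 1) * j < m * (2 * m + 1 - i)) ↔
        ((m + 1) * j + m * i < m * (2 * m + 1)) := by omega
    have c2 : ((m + 1) * j + m * (2 * m + 1 - i) < m * (2 * m + 1)) ↔
        ((m + 1) * j < m * i) := by omega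
    simp only [c1, c2]
    rw [Nat.add_comm]
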